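/- The minimum number of k-dimensional affine subspaces of ℝ^d needed to cover the lattice cube {0,...,n-1}^d is exactly n^(d-k). -/

import Mathlib

open Submodule Set


noncomputable def emb (d k : ℕ) (hk : k ≤ d) : Fin (d - k) → Fin d :=
  fun j => ⟨k + j, by omega⟩

lemma emb_inj (d k : ℕ) (hk : k ≤ d) : Function.Injective (emb d k hk) := by
  intro a b h
  simp only [emb, Fin.mk.injEq] at h
  exact Fin.ext (by omega)

noncomputable def Kker (d k : ℕ) (hk : k ≤ d) : Submodule ℝ (Fin d → ℝ) :=
  LinearMap.ker (LinearMap.funLeft ℝ ℝ (emb d k hk))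

lemma mem_Kker (d k : ℕ) (hk : k ≤ d) (x : Fin d → ℝ) :
    x ∈ Kker d k hk ↔ ∀ j, x (emb d k hk j) = 0 := by
  simp only [Kker, LinearMap.mem_ker, LinearMap.funLeft_apply]
  constructor
  · intro h j; exact congrFun h j
  · intro h; funext j; exact h j

lemma finrank_Kker (d k : ℕ) (hk : k ≤ d) : Module.finrank ℝ (Kker d k hk) = k := by
  unfold Kker
  have hsurj : Function.Surjective (LinearMap.funLeft ℝ ℝ (emb d k hk)) :=
    LinearMap.funLeft_surjective_of_injective ℝ ℝ _ (emb_inj d k hk)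
  have h1 := LinearMap.finrank_range_add_finrank_ker (LinearMap.funLeft ℝ ℝ (emb d k hk))
  rw [LinearMap.range_eq_top.2 hsurj, finrank_top] at h1
  simp only [Module.finrank_fintype_fun_eq_card, Fintype.card_fin] at h1
  omega

noncomputable def ptdef (n d k : ℕ) (f : Fin (d - k) → Fin n) : Fin d → ℝ := fun i =>
  if h : k ≤ (i : ℕ) then ((f ⟨(i : ℕ) - k, by omega⟩ : ℕ) : ℝ) else 0

lemma pt_emb (n d k : ℕ) (hk : k ≤ d) (f : Fin (d - k) → Fin n) (j : Fin (d - k)) :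
    ptdef n d k f (emb d k hk j) = (f j : ℕ) := by
  unfold ptdef
  rw [dif_pos (by simp only [emb]; omega)]
  simp only [emb]
  have hj : (⟨k + (j : ℕ) - k, by omega⟩ : Fin (d - k)) = j := Fin.ext (by simp)
  rw [hj]

lemma mem_part (n d k : ℕ) (hk : k ≤ d) (hn : 1 ≤ n) :
    ∃ S : Fin (n ^ (d - k)) → AffineSubspace ℝ (Fin d → ℝ),
      (∀ i, Module.finrank ℝ (S i).direction = k) ∧
      {x : Fin d → ℝ | ∀ i, ∃ a : ℕ, a < n ∧ x i = a} ⊆ ⋃ i, (S i : Set (Fin d → ℝ)) := by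
  have hcard : Fintype.card (Fin (d - k) → Fin n) = n ^ (d - k) := by simp
  let e : Fin (n ^ (d - k)) ≃ (Fin (d - k) → Fin n) := (Fintype.equivFinOfCardEq hcard).symm
  classical
  refine ⟨fun i => AffineSubspace.mk' (ptdef n d k (e i)) (Kker d k hk), ?_, ?_⟩
  · intro i; rw [AffineSubspace.direction_mk']; exact finrank_Kker d k hk
  · intro x hx
    choose a ha hxa using hx
    refine Set.mem_iUnion.2 ⟨e.symm (fun j => ⟨a (emb d k hk j), ha _⟩), ?_⟩
    rw [SetLike.mem_coe, AffineSubspace.mem_mk', mem_Kker]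
    intro j
    have h1 : ptdef n d k (e (e.symm (fun j => ⟨a (emb d k hk j), ha _⟩))) (emb d k hk j)
        = (a (emb d k hk j) : ℝ) := by
      rw [Equiv.apply_symm_apply]
      exact pt_emb n d k hk _ j
    show (x - ptdef n d k _) (emb d k hk j) = 0
    rw [Pi.sub_apply, h1, hxa]
    ring


noncomputable def latt (n d : ℕ) (g : Fin d → Fin n) : Fin d → ℝ := fun i => ((g i : ℕ) : ℝ)

lemma latt_inj (n d : ℕ) : Function.Injective (latt n d) := by
  intro g h hgh
  funext i
  have := congrFun hgh i
  simp only [latt, Nat.cast_inj] at this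
  exact Fin.ext this

lemma single_idx_inj (d : ℕ) : Function.Injective (fun i : Fin d => Pi.single i (1 : ℝ)) := by
  intro i j h
  by_contra hne
  have := congrFun h i
  simp [Pi.single_apply, hne] at this

open scoped Classical in
lemma key_card (n d k : ℕ) (hk : k ≤ d) (A : AffineSubspace ℝ (Fin d → ℝ))
    (hA : Module.finrank ℝ A.direction = k) :
    (Finset.univ.filter (fun g : Fin d → Fin n => latt n d g ∈ A)).card ≤ n ^ k := by
  classical
  set T := Finset.univ.filter (fun g : Fin d → Fin n => latt n d g ∈ A) with hT
  rcases T.eq_empty_or_nonempty with h0 | ⟨g0, hg0⟩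
  · simp [h0]
  have hg0A : latt n d g0 ∈ A := by
    rw [hT, Finset.mem_filter] at hg0; exact hg0.2
  set V := A.direction with hV
  let bV : Module.Basis (Fin k) ℝ V := (Module.finBasis ℝ V).reindex (finCongr hA)
  let f : Fin k → (Fin d → ℝ) := fun i => (bV i : Fin d → ℝ)
  have hf_li : LinearIndependent ℝ f :=
    bV.linearIndependent.map' V.subtype (Submodule.ker_subtype V)
  set s : Set (Fin d → ℝ) := Set.range f with hs
  have hs_li : LinearIndepOn ℝ id s := (linearIndepOn_id_range_iff hf_li.injective).2 hf_li
  have hspan_s : span ℝ s = V := by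
    have hcomp : f = V.subtype ∘ bV := rfl
    rw [hs, hcomp, Set.range_comp, ← Submodule.map_span, bV.span_eq, Submodule.map_top,
      Submodule.range_subtype]
  set t : Set (Fin d → ℝ) := s ∪ Set.range (fun i : Fin d => Pi.single i (1 : ℝ)) with ht
  have hst : s ⊆ t := Set.subset_union_left
  have htop : ⊤ ≤ span ℝ t := by
    have hr : Set.range (fun i : Fin d => Pi.single i (1 : ℝ))
        = Set.range (Pi.basisFun ℝ (Fin d)) := by
      refine congrArg Set.range (funext fun i => ?_)
      simp [Pi.basisFun_apply]
    rw [ht]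
    refine le_trans ?_ (span_mono Set.subset_union_right)
    rw [hr, (Pi.basisFun ℝ (Fin d)).span_eq]
  set b : Set (Fin d → ℝ) := hs_li.extend hst with hb
  let B : Module.Basis b ℝ (Fin d → ℝ) := Module.Basis.extendLe hs_li hst htop
  have hsb : s ⊆ b := hs_li.subset_extend hst
  have hbt : b ⊆ t := hs_li.extend_subset hst
  haveI : Fintype b := FiniteDimensional.fintypeBasisIndex B
  have hbcard : b.ncard = d := by
    have h1 := Module.finrank_eq_card_basis B
    simp only [Module.finrank_fintype_fun_eq_card, Fintype.card_fin] at h1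
    rw [Set.ncard_eq_toFinset_card', Set.toFinset_card]
    omega
  have hscard : s.ncard = k := by
    rw [hs, Set.ncard_eq_toFinset_card', Set.toFinset_range,
      Finset.card_image_of_injective _ hf_li.injective]
    simp
  have hbfin : b.Finite := b.toFinite
  have hdiffcard : (b \ s).ncard = d - k := by
    rw [Set.ncard_diff hsb (Set.finite_range f), hbcard, hscard]
  set J : Finset (Fin d) := Finset.univ.filter (fun i => Pi.single i (1 : ℝ) ∈ b \ s) with hJ
  have hJcard : J.card = d - k := by
    have himg : (fun i : Fin d => Pi.single i (1 : ℝ)) '' {i | Pi.single i (1 : ℝ) ∈ b \ s}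
        = b \ s := by
      apply Set.Subset.antisymm
      · rintro x ⟨i, hi, rfl⟩; exact hi
      · intro x hx
        have hxt : x ∈ t := hbt hx.1
        rcases hxt with hxs | ⟨i, rfl⟩
        · exact absurd hxs hx.2
        · exact ⟨i, hx, rfl⟩
    have hni := Set.ncard_image_of_injective {i | Pi.single i (1 : ℝ) ∈ b \ s} (single_idx_inj d)
    rw [himg, hdiffcard] at hni
    have hJset : ({i | Pi.single i (1 : ℝ) ∈ b \ s} : Set (Fin d)) = ↑J := by
      ext i; simp [hJ]
    rw [hJset, Set.ncard_coe_finset] at hni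
    omega
  have hdisj : Disjoint V (span ℝ (b \ s)) := by
    have hBli := B.linearIndependent
    have hcoe : ⇑B = ((↑) : b → (Fin d → ℝ)) := Module.Basis.coe_extendLe _ _ _
    have hd := hBli.disjoint_span_image (s := (↑) ⁻¹' s) (t := (↑) ⁻¹' (b \ s)) ?_
    · rw [hcoe] at hd
      rw [Subtype.image_preimage_coe, Subtype.image_preimage_coe] at hd
      rw [Set.inter_eq_self_of_subset_right hsb,
        Set.inter_eq_self_of_subset_right Set.diff_subset] at hd
      rwa [hspan_s] at hd
    · rw [Set.disjoint_left]
      rintro ⟨x, hxb⟩ hxs hxd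
      simp only [Set.mem_preimage] at hxs hxd
      exact hxd.2 hxs
  have hinj : Set.InjOn (fun g : Fin d → Fin n => (fun i : (Jᶜ : Finset (Fin d)) => g i.1))
      ↑T := by
    intro g hg h hh hgh
    have hgA : latt n d g ∈ A := by
      rw [hT] at hg; simp only [Finset.coe_filter, Set.mem_setOf_eq] at hg; exact hg.2
    have hhA : latt n d h ∈ A := by
      rw [hT] at hh; simp only [Finset.coe_filter, Set.mem_setOf_eq] at hh; exact hh.2
    have hdiffV : latt n d g - latt n d h ∈ V :=
      AffineSubspace.vsub_mem_direction hgA hhA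
    have hzero : ∀ i ∉ J, (latt n d g - latt n d h) i = 0 := by
      intro i hi
      have hgi : g i = h i := congrFun hgh ⟨i, Finset.mem_compl.2 hi⟩
      simp [latt, hgi]
    have hdiffW : latt n d g - latt n d h ∈ span ℝ (b \ s) := by
      have heq : latt n d g - latt n d h
          = (∑ i ∈ J, (latt n d g - latt n d h) i • (Pi.single i (1 : ℝ) : Fin d → ℝ)) := by
        funext j
        rw [Finset.sum_apply]
        by_cases hj : j ∈ J
        · rw [Finset.sum_eq_single j]
          · simp
          · intro c _ hc
            simp [Pi.single_apply, Ne.symm hc]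
          · intro hj'; exact absurd hj hj'
        · rw [hzero j hj]
          apply (Finset.sum_eq_zero _).symm
          intro c hc
          have hcj : c ≠ j := by rintro rfl; exact hj hc
          simp [Pi.single_apply, hcj]
      rw [heq]
      apply Submodule.sum_mem
      intro i hi
      apply Submodule.smul_mem
      apply Submodule.subset_span
      rw [hJ] at hi
      simpa using (Finset.mem_filter.1 hi).2
    have hz : latt n d g - latt n d h = 0 :=
      Submodule.disjoint_def.1 hdisj _ hdiffV hdiffW
    exact latt_inj n d (by rwa [sub_eq_zero] at hz)
  calc T.card ≤ Fintype.card ((Jᶜ : Finset (Fin d)) → Fin n) := by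
        have hcle := Finset.card_le_card_of_injOn
          (f := fun g : Fin d → Fin n => (fun i : (Jᶜ : Finset (Fin d)) => g i.1))
          (t := Finset.univ) (fun g _ => Finset.mem_univ _) hinj
        simpa using hcle
    _ = n ^ k := by
        rw [Fintype.card_fun]
        simp only [Fintype.card_fin, Fintype.card_coe, Finset.card_compl, hJcard]
        congr 1
        omega

theorem stmt3 (n d k : ℕ) (hk : k ≤ d) (hn : 1 ≤ n) :
    IsLeast {m : ℕ | ∃ S : Fin m → AffineSubspace ℝ (Fin d → ℝ),
        (∀ i, Module.finrank ℝ (S i).direction = k) ∧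
        {x : Fin d → ℝ | ∀ i, ∃ a : ℕ, a < n ∧ x i = a} ⊆ ⋃ i, (S i : Set (Fin d → ℝ))}
      (n ^ (d - k)) := by
  constructor
  · exact mem_part n d k hk hn
  · rintro m ⟨S, hdim, hcov⟩
    classical
    have hmem : ∀ g : Fin d → Fin n, ∃ i, latt n d g ∈ S i := by
      intro g
      have hg : latt n d g ∈ {x : Fin d → ℝ | ∀ i, ∃ a : ℕ, a < n ∧ x i = a} :=
        fun i => ⟨(g i : ℕ), (g i).2, rfl⟩
      exact Set.mem_iUnion.1 (hcov hg)
    choose F hF using hmem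
    have h3 : ∀ i : Fin m, (Finset.univ.filter (fun g : Fin d → Fin n => F g = i)).card
        ≤ n ^ k := by
      intro i
      refine le_trans (Finset.card_le_card ?_) (key_card n d k hk (S i) (hdim i))
      intro g hg
      simp only [Finset.mem_filter, Finset.mem_univ, true_and] at hg ⊢
      rw [← hg]; exact hF g
    have hcount : n ^ d ≤ m * n ^ k := by
      have h2 := Finset.card_eq_sum_card_fiberwise
        (f := F) (s := (Finset.univ : Finset (Fin d → Fin n))) (t := Finset.univ)
        (fun g _ => Finset.mem_univ _)
      calc n ^ d = (Finset.univ : Finset (Fin d → Fin n)).card := by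
            simp [Finset.card_univ]
        _ = ∑ i : Fin m, (Finset.univ.filter (fun g : Fin d → Fin n => F g = i)).card := h2
        _ ≤ ∑ _i : Fin m, n ^ k := Finset.sum_le_sum (fun i _ => h3 i)
        _ = m * n ^ k := by simp [Finset.sum_const, mul_comm]
    have hpow : n ^ (d - k) * n ^ k = n ^ d := by
      rw [← pow_add]; congr 1; omega
    have hnk : 0 < n ^ k := pow_pos hn k
    exact Nat.le_of_mul_le_mul_right (by rw [hpow]; exact hcount) hnk
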